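/- Let n ∈ ℕ and let V be a finite set of vectors in {0,1}^{2n} containing both the all-zero vector 0_{2n} and the all-one vector 1_{2n}. For v ∈ V let v⁺ ∈ {0,1}^{2n+2} be the vector that agrees with v on the first 2n coordinates and has value 0 at coordinate 2n+1 and value 1 at coordinate 2n+2. Let V_b = {v⁺ : v ∈ V} and V_r = {0_{2n+2}, 1_{2n+2}} (the all-zero and all-one vectors of dimension 2n+2). Then there exists c ∈ {0,1}^{2n} with exactly n ones such that δ(c,v) ≤ n for every v ∈ V, if and only if there exist c⁺ ∈ {0,1}^{2n+2} and r ∈ ℕ such that δ(c⁺,w) ≤ r for every w ∈ V_b and δ(c⁺,w) > r for every w ∈ V_r. -/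

import Mathlib

open Finset

def extendVec {n : ℕ} (v : Fin (2 * n) → Bool) : Fin (2 * n + 2) → Bool :=
  fun i => if h : (i : ℕ) < 2 * n then v ⟨i, h⟩ else decide ((i : ℕ) = 2 * n + 1)



lemma ham_eq_sum {m : ℕ} (x y : Fin m → Bool) :
    hammingDist x y = ∑ i, if x i ≠ y i then 1 else 0 := by
  rw [hammingDist, Finset.card_filter]

lemma ham_split {n : ℕ} (x y : Fin (2 * n + 2) → Bool) :
    hammingDist x y =
      hammingDist (fun i : Fin (2 * n) => x i.castSucc.castSucc)
        (fun i : Fin (2 * n) => y i.castSucc.castSucc)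
      + (if x (Fin.last (2*n)).castSucc ≠ y (Fin.last (2*n)).castSucc then 1 else 0)
      + (if x (Fin.last (2*n+1)) ≠ y (Fin.last (2*n+1)) then 1 else 0) := by
  rw [ham_eq_sum, ham_eq_sum]
  rw [Fin.sum_univ_castSucc (n := 2*n+1), Fin.sum_univ_castSucc (n := 2*n)]

lemma extendVec_emb {n : ℕ} (v : Fin (2*n) → Bool) (i : Fin (2*n)) :
    extendVec v i.castSucc.castSucc = v i := by
  simp [extendVec, i.isLt]

lemma extendVec_A {n : ℕ} (v : Fin (2*n) → Bool) :
    extendVec v (Fin.last (2*n)).castSucc = false := by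
  simp [extendVec]

lemma extendVec_B {n : ℕ} (v : Fin (2*n) → Bool) :
    extendVec v (Fin.last (2*n+1)) = true := by
  simp [extendVec]

lemma ham_zero {m : ℕ} (c : Fin m → Bool) :
    hammingDist c (fun _ => false) = (univ.filter fun i => c i = true).card := by
  simp [hammingDist]

lemma ham_one {m : ℕ} (c : Fin m → Bool) :
    hammingDist c (fun _ => true) + hammingDist c (fun _ => false) = m := by
  rw [ham_zero]
  have h : hammingDist c (fun _ => true) = (univ.filter fun i => ¬ (c i = true)).card := by
    simp [hammingDist]
  rw [h, Nat.add_comm, Finset.card_filter_add_card_filter_not]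
  simp

theorem restMR_to_2red_BHC (n : ℕ) (V : Finset (Fin (2 * n) → Bool))
    (h0 : (fun _ => false) ∈ V) (h1 : (fun _ => true) ∈ V) :
    (∃ c : Fin (2 * n) → Bool,
        (Finset.univ.filter (fun i => c i = true)).card = n ∧
        ∀ v ∈ V, hammingDist c v ≤ n) ↔
      (∃ (cp : Fin (2 * n + 2) → Bool) (r : ℕ),
        (∀ w ∈ V.image extendVec, hammingDist cp w ≤ r) ∧
        (∀ w ∈ ({(fun _ => false), (fun _ => true)} : Finset (Fin (2 * n + 2) → Bool)),
          r < hammingDist cp w)) := by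
  constructor
  · rintro ⟨c, hc, hV⟩
    have hD0 : hammingDist c (fun _ => false) = n := by rw [ham_zero, hc]
    have hD1 : hammingDist c (fun _ => true) = n := by
      have := ham_one c; omega
    refine ⟨extendVec c, n, ?_, ?_⟩
    · intro w hw
      rw [Finset.mem_image] at hw
      obtain ⟨v, hv, rfl⟩ := hw
      rw [ham_split]
      simp only [extendVec_emb, extendVec_A, extendVec_B, ne_eq, not_true_eq_false,
        if_false, not_false_eq_true]
      simpa using hV v hv
    · intro w hw
      simp only [Finset.mem_insert, Finset.mem_singleton] at hw
      rcases hw with rfl | rfl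
      · rw [ham_split]
        simp only [extendVec_emb, extendVec_A, extendVec_B]
        have h' : (hammingDist (fun i : Fin (2*n) => c i) fun _ : Fin (2*n) => false) = n := hD0
        simp only [h'] at *
        simp [h']
      · rw [ham_split]
        simp only [extendVec_emb, extendVec_A, extendVec_B]
        have h' : (hammingDist (fun i : Fin (2*n) => c i) fun _ : Fin (2*n) => true) = n := hD1
        simp [h']
  · rintro ⟨cp, r, hblue, hred⟩
    set c : Fin (2*n) → Bool := fun i => cp i.castSucc.castSucc with hc
    have h0' := hblue _ (Finset.mem_image_of_mem _ h0)
    have h1' := hblue _ (Finset.mem_image_of_mem _ h1)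
    have hr0 := hred (fun _ => false) (by simp)
    have hr1 := hred (fun _ => true) (by simp)
    rw [ham_split] at h0' h1' hr0 hr1
    simp only [extendVec_emb, extendVec_A, extendVec_B] at h0' h1' hr0 hr1
    have hsum := ham_one c
    have key : cp (Fin.last (2*n)).castSucc = false ∧ cp (Fin.last (2*n+1)) = true := by
      cases hA : cp (Fin.last (2*n)).castSucc <;> cases hB : cp (Fin.last (2*n+1)) <;>
        simp_all <;> omega
    obtain ⟨hA, hB⟩ := key
    simp only [hA, hB] at h0' h1' hr0 hr1
    simp at h0' h1' hr0 hr1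
    have e0 : hammingDist c (fun _ => false) ≤ r := h0'
    have e1 : hammingDist c (fun _ => true) ≤ r := h1'
    have f0 : r < hammingDist c (fun _ => false) + 1 := Nat.lt_succ_of_le hr0
    have f1 : r < hammingDist c (fun _ => true) + 1 := Nat.lt_succ_of_le hr1
    refine ⟨c, ?_, ?_⟩
    · rw [← ham_zero]
      omega
    · intro v hv
      have hv' := hblue _ (Finset.mem_image_of_mem _ hv)
      rw [ham_split] at hv'
      simp only [extendVec_emb, extendVec_A, extendVec_B, hA, hB] at hv'
      simp at hv'
      have hvc : hammingDist c v ≤ r := hv'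
      omega
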